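/- Let T = [m_1, m_2, m_3] be a triple of integers with 2 ≤ m_1 ≤ m_2 ≤ m_3 such that Θ(T) > 0, α(T) := 4/Θ(T) is a positive integer, and m_i divides α(T) for i = 1, 2, 3. Then m_3 ≤ 30. -/

import Mathlib

/-- For a tuple `T = [m₁, ..., m_r]`, `Θ(T) := -2 + ∑ᵢ (1 - 1/mᵢ)` as a rational number. -/
def Theta (T : List ℕ) : ℚ :=
  -2 + (T.map (fun m => 1 - (1 : ℚ) / m)).sum

/-- If `T = [m₁, m₂, m₃]` with `2 ≤ m₁ ≤ m₂ ≤ m₃`, `Θ(T) > 0`, `α(T) = 4/Θ(T)` is a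
positive integer `a`, and each `mᵢ` divides `a`, then `m₃ ≤ 30`. -/
theorem last_le_thirty_of_type (m₁ m₂ m₃ : ℕ)
    (h₁ : 2 ≤ m₁) (h₁₂ : m₁ ≤ m₂) (h₂₃ : m₂ ≤ m₃)
    (hpos : 0 < Theta [m₁, m₂, m₃])
    (a : ℕ) (hapos : 0 < a)
    (halpha : (a : ℚ) * Theta [m₁, m₂, m₃] = 4)
    (hdvd₁ : m₁ ∣ a) (hdvd₂ : m₂ ∣ a) (hdvd₃ : m₃ ∣ a) :
    m₃ ≤ 30 := by
  obtain ⟨k₁, hk₁⟩ := hdvd₁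
  obtain ⟨k₂, hk₂⟩ := hdvd₂
  obtain ⟨k₃, hk₃⟩ := hdvd₃
  have hm₁ : (0:ℚ) < (m₁:ℚ) := by exact_mod_cast Nat.lt_of_lt_of_le (by norm_num) h₁
  have hm₂ : (0:ℚ) < (m₂:ℚ) := by exact_mod_cast Nat.lt_of_lt_of_le (by norm_num) (h₁.trans h₁₂)
  have hm₃ : (0:ℚ) < (m₃:ℚ) := by
    exact_mod_cast Nat.lt_of_lt_of_le (by norm_num) (h₁.trans (h₁₂.trans h₂₃))
  have hd₁ : (a:ℚ)/m₁ = k₁ := by rw [hk₁]; push_cast; field_simp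
  have hd₂ : (a:ℚ)/m₂ = k₂ := by rw [hk₂]; push_cast; field_simp
  have hd₃ : (a:ℚ)/m₃ = k₃ := by rw [hk₃]; push_cast; field_simp
  have expand : (a : ℚ) * Theta [m₁, m₂, m₃] = a - a/m₁ - a/m₂ - a/m₃ := by
    simp [Theta]
    ring
  rw [expand, hd₁, hd₂, hd₃] at halpha
  have key : a = 4 + k₁ + k₂ + k₃ := by
    have : (a:ℚ) = 4 + k₁ + k₂ + k₃ := by linarith
    exact_mod_cast this
  -- basic facts
  have hk₃pos : 1 ≤ k₃ := by
    rcases Nat.eq_zero_or_pos k₃ with h | h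
    · rw [h, Nat.mul_zero] at hk₃; omega
    · exact h
  have hk₂pos : 1 ≤ k₂ := by
    rcases Nat.eq_zero_or_pos k₂ with h | h
    · rw [h, Nat.mul_zero] at hk₂; omega
    · exact h
  have hk21 : k₂ ≤ k₁ := by
    have : m₁ * k₂ ≤ m₁ * k₁ := by
      calc m₁ * k₂ ≤ m₂ * k₂ := Nat.mul_le_mul_right _ h₁₂
        _ = m₁ * k₁ := by omega
    exact Nat.le_of_mul_le_mul_left this (by omega)
  have hk32 : k₃ ≤ k₂ := by
    have : m₂ * k₃ ≤ m₂ * k₂ := by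
      calc m₂ * k₃ ≤ m₃ * k₃ := Nat.mul_le_mul_right _ h₂₃
        _ = m₂ * k₂ := by omega
    exact Nat.le_of_mul_le_mul_left this (by omega)
  by_contra hcon
  push_neg at hcon
  have h31 : 31 * k₃ ≤ a := by
    calc 31 * k₃ ≤ m₃ * k₃ := Nat.mul_le_mul_right _ (by omega)
      _ = a := hk₃.symm
  rcases Nat.lt_or_ge m₁ 4 with h4 | h4
  · -- m₁ = 2 or 3
    interval_cases m₁
    · -- m₁ = 2
      have e1 : 2 * k₁ = a := hk₁.symm
      rcases Nat.lt_or_ge m₂ 5 with h5 | h5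
      · interval_cases m₂ <;> omega
      · have e2 : 5 * k₂ ≤ a := by
          calc 5 * k₂ ≤ m₂ * k₂ := Nat.mul_le_mul_right _ h5
            _ = a := hk₂.symm
        omega
    · -- m₁ = 3
      have e1 : 3 * k₁ = a := hk₁.symm
      rcases Nat.lt_or_ge m₂ 4 with h5 | h5
      · interval_cases m₂ <;> omega
      · have e2 : 4 * k₂ ≤ a := by
          calc 4 * k₂ ≤ m₂ * k₂ := Nat.mul_le_mul_right _ h5
            _ = a := hk₂.symm
        omega
  · -- m₁ ≥ 4
    have e1 : 4 * k₁ ≤ a := by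
      calc 4 * k₁ ≤ m₁ * k₁ := Nat.mul_le_mul_right _ h4
        _ = a := hk₁.symm
    omega
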